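/- Let α be a finite set, f a pmf on α, M ≥ 1 a natural number, and δ ≥ 0 a real number. If X₁,…,X_M are i.i.d. with common pmf f and p̂ denotes their empirical distribution, then Pr(H(p̂‖f) ≥ δ) ≤ (M+1)^{|α|} · exp(−2·M·δ²). -/

import Mathlib

open Finset

/-- `p` is a probability mass function on the finite type `α`. -/
def IsPmf {α : Type*} [Fintype α] (p : α → ℝ) : Prop :=
  (∀ a, 0 ≤ p a) ∧ ∑ a, p a = 1

/-- Squared Hellinger divergence between pmfs on a finite type. -/
noncomputable def hellingerSq {α : Type*} [Fintype α] (p q : α → ℝ) : ℝ :=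
  (1 / 2) * ∑ a, (Real.sqrt (p a) - Real.sqrt (q a)) ^ 2

/-- Hellinger distance between pmfs on a finite type. -/
noncomputable def hellinger {α : Type*} [Fintype α] (p q : α → ℝ) : ℝ :=
  Real.sqrt (hellingerSq p q)

/-- Empirical distribution of the sample `x = (x₁, …, x_M)`. -/
noncomputable def empDist {α : Type*} [Fintype α] [DecidableEq α] {M : ℕ}
    (x : Fin M → α) (a : α) : ℝ :=
  ((Finset.univ.filter fun i => x i = a).card : ℝ) / M

section Aux

variable {α : Type*} [Fintype α] [DecidableEq α]

/-- count of `a` in the sample -/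
def cnt {M : ℕ} (x : Fin M → α) (a : α) : ℕ :=
  (Finset.univ.filter fun i => x i = a).card

lemma empDist_eq {M : ℕ} (x : Fin M → α) (a : α) :
    empDist x a = (cnt x a : ℝ) / M := rfl

lemma sum_cnt {M : ℕ} (x : Fin M → α) : ∑ a, cnt x a = M := by
  classical
  have := Finset.card_eq_sum_card_fiberwise (s := (Finset.univ : Finset (Fin M)))
    (f := x) (t := Finset.univ) (fun i _ => Finset.mem_univ _)
  simpa [cnt] using this.symm

lemma cnt_le {M : ℕ} (x : Fin M → α) (a : α) : cnt x a ≤ M := by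
  calc cnt x a ≤ (Finset.univ : Finset (Fin M)).card := Finset.card_filter_le _ _
  _ = M := by simp

lemma prod_comp_eq_prod_pow {M : ℕ} (x : Fin M → α) (g : α → ℝ) :
    ∏ i, g (x i) = ∏ a, g a ^ cnt x a := by
  classical
  rw [← Finset.prod_fiberwise' Finset.univ x g]
  exact Finset.prod_congr rfl fun a _ => by rw [Finset.prod_const]; rfl

lemma empDist_nonneg {M : ℕ} (x : Fin M → α) (a : α) : 0 ≤ empDist x a := by
  rw [empDist_eq]; positivity

lemma sum_empDist {M : ℕ} (hM : 1 ≤ M) (x : Fin M → α) : ∑ a, empDist x a = 1 := by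
  simp_rw [empDist_eq]
  rw [← Finset.sum_div, ← Nat.cast_sum, sum_cnt, div_self]
  exact Nat.cast_ne_zero.2 (by omega)

end Aux

section Key

variable {α : Type*} [Fintype α] [DecidableEq α]

lemma key_pointwise (f : α → ℝ) (hf : IsPmf f) {M : ℕ} (hM : 1 ≤ M) (δ : ℝ) (hδ : 0 ≤ δ)
    (x : Fin M → α) (hx : δ ≤ hellinger (empDist x) f) :
    ∏ i, f (x i) ≤ Real.exp (-2 * M * δ ^ 2) * ∏ i, empDist x (x i) := by
  classical
  set q : α → ℝ := empDist x with hq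
  have hq0 : ∀ a, 0 ≤ q a := empDist_nonneg x
  have hq1 : ∑ a, q a = 1 := sum_empDist hM x
  have hMpos : (0:ℝ) < M := by exact_mod_cast Nat.lt_of_lt_of_le Nat.zero_lt_one hM
  set ρ : ℝ := ∑ a, Real.sqrt (q a * f a) with hρ
  have hρ0 : 0 ≤ ρ := Finset.sum_nonneg fun a _ => Real.sqrt_nonneg _
  -- hellingerSq q f = 1 - ρ
  have hHsq : hellingerSq q f = 1 - ρ := by
    rw [hellingerSq]
    have : ∀ a : α, (Real.sqrt (q a) - Real.sqrt (f a)) ^ 2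
        = q a + f a - 2 * Real.sqrt (q a * f a) := by
      intro a
      rw [sub_sq, Real.sq_sqrt (hq0 a), Real.sq_sqrt (hf.1 a), Real.sqrt_mul (hq0 a)]
      ring
    simp_rw [this]
    rw [Finset.sum_sub_distrib, Finset.sum_add_distrib, hq1, hf.2, ← Finset.mul_sum, ← hρ]
    ring
  have hHsq0 : 0 ≤ hellingerSq q f := by
    rw [hellingerSq]
    positivity
  have hδ2 : δ ^ 2 ≤ 1 - ρ := by
    have := pow_le_pow_left₀ hδ hx 2
    rwa [hellinger, Real.sq_sqrt hHsq0, hHsq] at this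
  have hρle : ρ ≤ 1 - δ ^ 2 := by linarith
  have h1δ : 0 ≤ 1 - δ ^ 2 := le_trans hρ0 hρle
  -- AM-GM
  set z : α → ℝ := fun a => Real.sqrt (f a) / Real.sqrt (q a) with hz
  have hz0 : ∀ a, 0 ≤ z a := fun a => div_nonneg (Real.sqrt_nonneg _) (Real.sqrt_nonneg _)
  have hwz : ∀ a, q a * z a = Real.sqrt (q a * f a) := by
    intro a
    by_cases h : q a = 0
    · simp [hz, h]
    · have hqa : 0 < q a := lt_of_le_of_ne (hq0 a) (Ne.symm h)
      have hs : Real.sqrt (q a) ≠ 0 := ne_of_gt (Real.sqrt_pos.2 hqa)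
      rw [hz, Real.sqrt_mul (hq0 a)]
      calc q a * (Real.sqrt (f a) / Real.sqrt (q a))
          = (Real.sqrt (q a) * Real.sqrt (q a)) * (Real.sqrt (f a) / Real.sqrt (q a)) := by
            rw [Real.mul_self_sqrt (hq0 a)]
        _ = Real.sqrt (q a) * Real.sqrt (f a) := by
            field_simp
  have hsum_wz : ∑ a, q a * z a = ρ := by rw [hρ]; exact Finset.sum_congr rfl fun a _ => hwz a
  have hGM : ∏ a, z a ^ (q a) ≤ ρ := by
    have h := Real.geom_mean_le_arith_mean_weighted Finset.univ q z
      (fun a _ => hq0 a) hq1 (fun a _ => hz0 a)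
    rwa [hsum_wz] at h
  set G : ℝ := ∏ a, z a ^ (q a) with hGdef
  have hG0 : 0 ≤ G := Finset.prod_nonneg fun a _ => Real.rpow_nonneg (hz0 a) _
  have hGpow : G ^ (2 * M) ≤ Real.exp (-2 * M * δ ^ 2) := by
    calc G ^ (2*M) ≤ (1 - δ^2)^(2*M) := pow_le_pow_left₀ hG0 (le_trans hGM hρle) _
    _ ≤ Real.exp (-δ^2) ^ (2*M) :=
        pow_le_pow_left₀ h1δ (by linarith [Real.add_one_le_exp (-δ^2)]) _
    _ = Real.exp (-2*M*δ^2) := by rw [← Real.exp_nat_mul]; congr 1; push_cast; ring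
  have hcq : ∀ a, q a = (cnt x a : ℝ) / M := fun a => empDist_eq x a
  have hz2 : ∀ a, z a ^ 2 = f a / q a := by
    intro a
    by_cases h : q a = 0
    · simp [hz, h]
    · rw [hz, div_pow, Real.sq_sqrt (hf.1 a), Real.sq_sqrt (hq0 a)]
  have hGpow_eq : G ^ (2 * M) = ∏ a, (f a / q a) ^ (cnt x a) := by
    rw [hGdef, ← Finset.prod_pow]
    refine Finset.prod_congr rfl fun a _ => ?_
    have h1 : (z a ^ (q a)) ^ (2 * M) = (z a ^ (q a)) ^ (((2 * M : ℕ) : ℝ)) :=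
      (Real.rpow_natCast _ _).symm
    rw [h1, ← Real.rpow_mul (hz0 a)]
    have h2 : q a * ((2 * M : ℕ) : ℝ) = ((2 * cnt x a : ℕ) : ℝ) := by
      rw [hcq a]
      push_cast
      field_simp
    rw [h2, Real.rpow_natCast, pow_mul, hz2 a]
  have hfq : ∀ a, f a ^ (cnt x a) = (f a / q a) ^ (cnt x a) * q a ^ (cnt x a) := by
    intro a
    by_cases h : cnt x a = 0
    · simp [h]
    · have hqa : q a ≠ 0 := by
        rw [hcq a]
        have hc : (0:ℝ) < (cnt x a : ℝ) := by exact_mod_cast Nat.pos_of_ne_zero h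
        positivity
      rw [← mul_pow, div_mul_cancel₀ _ hqa]
  calc ∏ i, f (x i) = ∏ a, f a ^ cnt x a := prod_comp_eq_prod_pow x f
    _ = (∏ a, (f a / q a) ^ cnt x a) * ∏ a, q a ^ cnt x a := by
        rw [← Finset.prod_mul_distrib]
        exact Finset.prod_congr rfl fun a _ => hfq a
    _ ≤ Real.exp (-2*M*δ^2) * ∏ a, q a ^ cnt x a := by
        refine mul_le_mul_of_nonneg_right ?_
          (Finset.prod_nonneg fun a _ => pow_nonneg (hq0 a) _)
        rw [← hGpow_eq]
        exact hGpow
    _ = Real.exp (-2*M*δ^2) * ∏ i, q (x i) := by rw [prod_comp_eq_prod_pow x q]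

end Key

section Main

variable {α : Type*} [Fintype α] [DecidableEq α]

lemma sum_prod_emp_le (M : ℕ) (hM : 1 ≤ M) :
    ∑ x : Fin M → α, ∏ i, empDist x (x i) ≤ ((M : ℝ) + 1) ^ Fintype.card α := by
  classical
  have hMne : (M : ℝ) ≠ 0 := Nat.cast_ne_zero.2 (by omega)
  set g : (Fin M → α) → (α → Fin (M + 1)) :=
    fun x a => ⟨cnt x a, Nat.lt_succ_of_le (cnt_le x a)⟩ with hg
  rw [← Finset.sum_fiberwise Finset.univ g (fun x => ∏ i, empDist x (x i))]
  have hfiber : ∀ c : α → Fin (M + 1),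
      (∑ x ∈ Finset.univ.filter (fun x : Fin M → α => g x = c),
        ∏ i, empDist x (x i)) ≤ 1 := by
    intro c
    rcases (Finset.univ.filter (fun x : Fin M → α => g x = c)).eq_empty_or_nonempty with h | h
    · rw [h]; simp
    · obtain ⟨x0, hx0⟩ := h
      have hcnt : ∀ x ∈ Finset.univ.filter (fun x : Fin M → α => g x = c),
          ∀ a, cnt x a = (c a : ℕ) := by
        intro x hx a
        have hgx : g x = c := (Finset.mem_filter.1 hx).2
        exact congrArg Fin.val (congrFun hgx a)
      set qc : α → ℝ := fun a => ((c a : ℕ) : ℝ) / M with hqc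
      have hqc0 : ∀ a, 0 ≤ qc a := fun a => by positivity
      have hsumqc : ∑ a, qc a = 1 := by
        rw [hqc]
        simp only
        rw [← Finset.sum_div]
        have hsum : ∑ a, ((c a : ℕ) : ℝ) = (M : ℝ) := by
          rw [← Nat.cast_sum]
          norm_cast
          calc ∑ a, (c a : ℕ) = ∑ a, cnt x0 a :=
                Finset.sum_congr rfl fun a _ => (hcnt x0 hx0 a).symm
            _ = M := sum_cnt x0
        rw [hsum]
        exact div_self hMne
      calc (∑ x ∈ Finset.univ.filter (fun x : Fin M → α => g x = c), ∏ i, empDist x (x i))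
          = ∑ x ∈ Finset.univ.filter (fun x : Fin M → α => g x = c), ∏ i, qc (x i) :=
            Finset.sum_congr rfl fun x hx => Finset.prod_congr rfl fun i _ => by
              rw [empDist_eq, hcnt x hx (x i)]
        _ ≤ ∑ x : Fin M → α, ∏ i, qc (x i) :=
            Finset.sum_le_sum_of_subset_of_nonneg (Finset.subset_univ _)
              (fun x _ _ => Finset.prod_nonneg fun i _ => hqc0 (x i))
        _ = ∏ _i : Fin M, ∑ a, qc a := (Fintype.prod_sum fun _ a => qc a).symm
        _ = 1 := by rw [hsumqc]; simp
  calc (∑ c : α → Fin (M + 1), ∑ x ∈ Finset.univ.filter (fun x : Fin M → α => g x = c),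
          ∏ i, empDist x (x i))
      ≤ ∑ _c : α → Fin (M + 1), (1 : ℝ) := Finset.sum_le_sum fun c _ => hfiber c
    _ = ((M : ℝ) + 1) ^ Fintype.card α := by
        rw [Finset.sum_const, Finset.card_univ, Fintype.card_fun]
        push_cast
        simp

end Main

/-- If `X₁, …, X_M` are i.i.d. with pmf `f` and `p̂` is their empirical distribution, then
`Pr(H(p̂‖f) ≥ δ) ≤ (M+1)^{|α|} · exp(−2Mδ²)`. -/
theorem prob_hellinger_emp_self_ge {α : Type*} [Fintype α] [DecidableEq α]
    (f : α → ℝ) (hf : IsPmf f) (M : ℕ) (hM : 1 ≤ M) (δ : ℝ) (hδ : 0 ≤ δ) :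
    (∑ x : Fin M → α,
        Set.indicator {x : Fin M → α | δ ≤ hellinger (empDist x) f}
          (fun x => ∏ i, f (x i)) x) ≤
      ((M : ℝ) + 1) ^ (Fintype.card α) * Real.exp (-2 * M * δ ^ 2) := by
  classical
  have step : ∀ x : Fin M → α,
      Set.indicator {x : Fin M → α | δ ≤ hellinger (empDist x) f}
        (fun x => ∏ i, f (x i)) x
      ≤ Real.exp (-2 * M * δ ^ 2) * ∏ i, empDist x (x i) := by
    intro x
    by_cases h : x ∈ {x : Fin M → α | δ ≤ hellinger (empDist x) f}
    · rw [Set.indicator_of_mem h]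
      exact key_pointwise f hf hM δ hδ x h
    · rw [Set.indicator_of_notMem h]
      exact mul_nonneg (Real.exp_pos _).le
        (Finset.prod_nonneg fun i _ => empDist_nonneg x (x i))
  calc (∑ x : Fin M → α,
        Set.indicator {x : Fin M → α | δ ≤ hellinger (empDist x) f}
          (fun x => ∏ i, f (x i)) x)
      ≤ ∑ x : Fin M → α, Real.exp (-2 * M * δ ^ 2) * ∏ i, empDist x (x i) :=
        Finset.sum_le_sum fun x _ => step x
    _ = Real.exp (-2 * M * δ ^ 2) * ∑ x : Fin M → α, ∏ i, empDist x (x i) := by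
        rw [← Finset.mul_sum]
    _ ≤ Real.exp (-2 * M * δ ^ 2) * (((M : ℝ) + 1) ^ Fintype.card α) :=
        mul_le_mul_of_nonneg_left (sum_prod_emp_le M hM) (Real.exp_pos _).le
    _ = ((M : ℝ) + 1) ^ (Fintype.card α) * Real.exp (-2 * M * δ ^ 2) := mul_comm _ _
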